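/- If g₁, …, g_m are elements of the first Grigorchuk group 𝒢 and f : C(m) → C(n) is a binary forest, then f ∘ (g₁ ⊕ ⋯ ⊕ g_m) = p_α ∘ (g₁' ⊕ ⋯ ⊕ g_n') ∘ f' for some binary forest f' : C(m) → C(n), some elements g₁', …, g_n' ∈ 𝒢, and some permutation α ∈ S_n. -/

import Mathlib

/-! Basic setup: the Cantor set `Δ = ℕ → Bool` and `C n = Fin n × Δ`,
the disjoint union of `n` copies of the Cantor set. -/

abbrev Δ : Type := ℕ → Bool
abbrev C (n : ℕ) : Type := Fin n × Δ

/-- A bijection between discrete spaces, as a homeomorphism. -/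
def discHomeo {X Y : Type*} [TopologicalSpace X] [TopologicalSpace Y]
    [DiscreteTopology X] [DiscreteTopology Y] (e : X ≃ Y) : X ≃ₜ Y :=
  ⟨e, continuous_of_discreteTopology, continuous_of_discreteTopology⟩

/-- The permutation homeomorphism `p_α : C n ≃ₜ C n`, permuting the copies
of the Cantor set according to `α`. -/
def permC {n : ℕ} (α : Equiv.Perm (Fin n)) : C n ≃ₜ C n :=
  (discHomeo α).prodCongr (Homeomorph.refl Δ)

/-- Cast between `C m` and `C n` when `m = n`. -/
def castC {m n : ℕ} (h : m = n) : C m ≃ₜ C n :=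
  (discHomeo (finCongr h)).prodCongr (Homeomorph.refl Δ)

/-- `C (m + n)` is the disjoint union of `C m` and `C n` (first `m` copies,
then the remaining `n` copies). -/
def toSum (m n : ℕ) : C (m + n) ≃ₜ (C m) ⊕ (C n) :=
  ((discHomeo finSumFinEquiv.symm).prodCongr (Homeomorph.refl Δ)).trans
    (Homeomorph.sumProdDistrib)

/-- The direct sum `f ⊕ g` of homeomorphisms, acting as `f` on the first `m`
copies (sent to the first `m'` copies) and as `g` on the last `n` copies. -/
def dsum {m m' n n' : ℕ} (f : C m ≃ₜ C m') (g : C n ≃ₜ C n') :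
    C (m + n) ≃ₜ C (m' + n') :=
  ((toSum m n).trans (f.sumCongr g)).trans (toSum m' n').symm

/-- The split homeomorphism `x : C 1 ≃ₜ C 2`: a sequence starting with letter
`i` is sent to the `(i+1)`-st copy of the Cantor set, deleting the first letter. -/
def split : C 1 ≃ₜ C 2 where
  toFun p := (finTwoEquiv.symm (p.2 0), fun k => p.2 (k + 1))
  invFun p := (0, fun k => Nat.casesOn k (finTwoEquiv p.1) (fun j => p.2 j))
  left_inv := by
    rintro ⟨i, w⟩
    refine Prod.ext (Subsingleton.elim _ _) ?_
    funext k
    cases k <;> simp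
  right_inv := by
    rintro ⟨i, w⟩
    refine Prod.ext ?_ rfl
    simp
  continuous_toFun := by
    refine Continuous.prodMk ?_ ?_
    · exact Continuous.comp continuous_of_discreteTopology
        ((continuous_apply 0).comp continuous_snd)
    · exact continuous_pi fun k => (continuous_apply (k + 1)).comp continuous_snd
  continuous_invFun := by
    refine Continuous.prodMk continuous_const ?_
    refine continuous_pi fun k => ?_
    cases k with
    | zero => exact Continuous.comp continuous_of_discreteTopology continuous_fst
    | succ j => exact (continuous_apply j).comp continuous_snd

/-- The split homeomorphism `x_i^{(n)} = id_{i-1} ⊕ x ⊕ id_{n-i} : C n ≃ₜ C (n+1)`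
(with `i` zero-indexed, so `i : Fin n` splits the `(i+1)`-st copy). -/
def splitAt {n : ℕ} (i : Fin n) : C n ≃ₜ C (n + 1) :=
  ((castC (show n = (i : ℕ) + 1 + (n - 1 - i) by have := i.isLt; omega)).trans
    (dsum (dsum (Homeomorph.refl (C i)) split) (Homeomorph.refl (C (n - 1 - i))))).trans
    (castC (show (i : ℕ) + 2 + (n - 1 - i) = n + 1 by have := i.isLt; omega))

/-- `IsForest f` says that `f : C m ≃ₜ C n` is a binary forest, i.e. a
(possibly empty) composition of split homeomorphisms.  A binary tree is a
binary forest with domain `C 1`. -/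
inductive IsForest : ∀ {m n : ℕ}, (C m ≃ₜ C n) → Prop where
  | refl (m : ℕ) : IsForest (Homeomorph.refl (C m))
  | step {m n : ℕ} {f : C m ≃ₜ C n} (i : Fin n) (hf : IsForest f) :
      IsForest (f.trans (splitAt i))

/-! The Grigorchuk generators `σ, b, c, d`, defined via the Grigorchuk automaton:
on binary sequences, `σ` flips the first letter, and `b(0w)=0σ(w)`, `b(1w)=1c(w)`,
`c(0w)=0σ(w)`, `c(1w)=1d(w)`, `d(0w)=0w`, `d(1w)=1b(w)`. -/

/-- States of the Grigorchuk automaton: the identity, `σ`, `b`, `c`, `d`. -/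
inductive GS : Type | e | s | b | c | d
deriving DecidableEq

instance instFintypeGS : Fintype GS :=
  ⟨{.e, .s, .b, .c, .d}, by intro x; cases x <;> decide⟩

instance : TopologicalSpace GS := ⊥
instance : DiscreteTopology GS := ⟨rfl⟩

/-- Output function of the Grigorchuk automaton. -/
def GS.out : GS → Bool → Bool
  | .s, i => !i
  | _,  i => i

/-- Transition function of the Grigorchuk automaton. -/
def GS.step : GS → Bool → GS
  | .e, _ => .e
  | .s, _ => .e
  | .b, false => .s
  | .b, true  => .c
  | .c, false => .s
  | .c, true  => .d
  | .d, false => .e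
  | .d, true  => .b

/-- The state of the automaton started in state `g` after reading `w 0, …, w (n-1)`. -/
def GS.stArr (g : GS) (w : Δ) : ℕ → GS
  | 0 => g
  | n + 1 => (GS.stArr g w n).step (w n)

/-- The action of the automaton state `g` on infinite binary sequences. -/
def GS.act (g : GS) (w : Δ) : Δ := fun n => (GS.stArr g w n).out (w n)

lemma GS.out_out : ∀ (g : GS) (i : Bool), g.out (g.out i) = i := by decide

lemma GS.step_out : ∀ (g : GS) (i : Bool), g.step (g.out i) = g.step i := by decide

lemma GS.stArr_act (g : GS) (w : Δ) : ∀ n, GS.stArr g (GS.act g w) n = GS.stArr g w n := by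
  intro n
  induction n with
  | zero => rfl
  | succ n ih => rw [GS.stArr, GS.stArr, ih, GS.act, GS.step_out]

lemma GS.act_act (g : GS) (w : Δ) : GS.act g (GS.act g w) = w := by
  funext n
  rw [GS.act, GS.stArr_act, GS.act, GS.out_out]

lemma GS.continuous_stArr (g : GS) (n : ℕ) : Continuous (fun w : Δ => GS.stArr g w n) := by
  induction n with
  | zero => exact continuous_const
  | succ n ih =>
      exact Continuous.comp (f := fun w : Δ => ((GS.stArr g w n), w n))
        (g := fun p : GS × Bool => p.1.step p.2)
        continuous_of_discreteTopology (ih.prodMk (continuous_apply n))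

lemma GS.continuous_act (g : GS) : Continuous (GS.act g) := by
  refine continuous_pi fun n => ?_
  exact Continuous.comp (f := fun w : Δ => ((GS.stArr g w n), w n))
    (g := fun p : GS × Bool => p.1.out p.2)
    continuous_of_discreteTopology ((GS.continuous_stArr g n).prodMk (continuous_apply n))

/-- The homeomorphism of the Cantor set determined by an automaton state. -/
def GS.homeo (g : GS) : Δ ≃ₜ Δ where
  toFun := GS.act g
  invFun := GS.act g
  left_inv := GS.act_act g
  right_inv := GS.act_act g
  continuous_toFun := GS.continuous_act g
  continuous_invFun := GS.continuous_act g

/-- Lift a homeomorphism of the Cantor set to `C 1`. -/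
def liftC1 (h : Δ ≃ₜ Δ) : C 1 ≃ₜ C 1 := (Homeomorph.refl (Fin 1)).prodCongr h

/-- The Grigorchuk generator `σ` (flips the first letter). -/
def gσ : C 1 ≃ₜ C 1 := liftC1 (GS.homeo .s)
/-- The Grigorchuk generator `b`. -/
def gb : C 1 ≃ₜ C 1 := liftC1 (GS.homeo .b)
/-- The Grigorchuk generator `c`. -/
def gc : C 1 ≃ₜ C 1 := liftC1 (GS.homeo .c)
/-- The Grigorchuk generator `d`. -/
def gd : C 1 ≃ₜ C 1 := liftC1 (GS.homeo .d)

/-- The group of self-homeomorphisms of `C n`, with `(f * g) x = f (g x)`. -/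
instance homeoGroup (n : ℕ) : Group (C n ≃ₜ C n) where
  mul f g := g.trans f
  one := Homeomorph.refl _
  inv := Homeomorph.symm
  mul_assoc a b c := rfl
  one_mul a := rfl
  mul_one a := rfl
  inv_mul_cancel a := Homeomorph.self_trans_symm a

/-- The first Grigorchuk group `𝒢 = ⟨σ, b, c, d⟩`. -/
def Grig : Subgroup (C 1 ≃ₜ C 1) :=
  Subgroup.closure {gσ, gb, gc, gd}

/-- The set `K = {1, b, c, d}` of homeomorphisms of `C 1`. -/
def Kset : Set (C 1 ≃ₜ C 1) := {Homeomorph.refl (C 1), gb, gc, gd}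

/-- The `n`-fold direct sum `k₁ ⊕ ⋯ ⊕ k_n` of homeomorphisms of `C 1`. -/
def dsumFam : {n : ℕ} → (Fin n → (C 1 ≃ₜ C 1)) → (C n ≃ₜ C n)
  | 0, _ => Homeomorph.refl _
  | n + 1, k => dsum (dsumFam (fun i : Fin n => k i.castSucc)) (k (Fin.last n))

/-- The direct sum `h₁ ⊕ ⋯ ⊕ h_n` of a family of homeomorphisms
`h i : C 1 ≃ₜ C (m i)`. -/
def dsumFamH : {n : ℕ} → {m : Fin n → ℕ} → (∀ i, C 1 ≃ₜ C (m i)) →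
    (C n ≃ₜ C (∑ i, m i))
  | 0, _, _ => castC (by simp)
  | n + 1, m, h =>
      (dsum (dsumFamH (fun i : Fin n => h i.castSucc)) (h (Fin.last n))).trans
        (castC (Fin.sum_univ_castSucc m).symm)

/-- The group `K_n = {p_α ∘ (k₁ ⊕ ⋯ ⊕ k_n) : α ∈ S_n, kᵢ ∈ K}`. -/
def Kn (n : ℕ) : Set (C n ≃ₜ C n) :=
  {h | ∃ (α : Equiv.Perm (Fin n)) (k : Fin n → (C 1 ≃ₜ C 1)),
    (∀ i, k i ∈ Kset) ∧ h = (dsumFam k).trans (permC α)}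

/-- `σ_j : C m ≃ₜ C m`, acting as `σ` on the `(j+1)`-st copy (zero-indexed `j`)
of the Cantor set and as the identity elsewhere. -/
def sigmaAt {m : ℕ} (j : Fin m) : C m ≃ₜ C m :=
  dsumFam (fun i => if i = j then gσ else Homeomorph.refl (C 1))

/-- Membership in the groupoid `𝔙` generated by all split homeomorphisms and
all permutation homeomorphisms. -/
inductive InV : ∀ {m n : ℕ}, (C m ≃ₜ C n) → Prop where
  | split {n : ℕ} (i : Fin n) : InV (splitAt i)
  | perm {n : ℕ} (α : Equiv.Perm (Fin n)) : InV (permC α)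
  | comp {m n p : ℕ} {f : C m ≃ₜ C n} {g : C n ≃ₜ C p} :
      InV f → InV g → InV (f.trans g)
  | inv {m n : ℕ} {f : C m ≃ₜ C n} : InV f → InV f.symm

/-- Membership in Röver's groupoid `𝔙𝒢`, generated by `𝔙` together with the
elements of the Grigorchuk group `𝒢`. -/
inductive InVG : ∀ {m n : ℕ}, (C m ≃ₜ C n) → Prop where
  | split {n : ℕ} (i : Fin n) : InVG (splitAt i)
  | perm {n : ℕ} (α : Equiv.Perm (Fin n)) : InVG (permC α)
  | grig {g : C 1 ≃ₜ C 1} : g ∈ Grig → InVG g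
  | comp {m n p : ℕ} {f : C m ≃ₜ C n} {g : C n ≃ₜ C p} :
      InVG f → InVG g → InVG (f.trans g)
  | inv {m n : ℕ} {f : C m ≃ₜ C n} : InVG f → InVG f.symm

/-- The coset `[f] = K_n f = {k ∘ f : k ∈ K_n}` of `f : C 1 ≃ₜ C n`. -/
def coset {n : ℕ} (f : C 1 ≃ₜ C n) : Set (C 1 ≃ₜ C n) :=
  {h | ∃ k ∈ Kn n, h = f.trans k}

/-- The ambient type for vertices of the poset `𝒫`: a rank `n` together with
a set of homeomorphisms `C 1 ≃ₜ C n`. -/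
def PP : Type := Σ n : ℕ, Set (C 1 ≃ₜ C n)

/-- A member of `PP` is a vertex of `𝒫` if it is the coset `[f] = K_n f` of
some `f : C 1 ≃ₜ C n` in Röver's groupoid. -/
def IsVert (v : PP) : Prop :=
  ∃ f : C 1 ≃ₜ C v.1, InVG f ∧ v.2 = coset f

/-- `w` is a splitting of `v` if `v = [f]` and `w = [x_i ∘ f]` for some
representative `f` and some index `i`. -/
def SplittingOf (v w : PP) : Prop :=
  ∃ (n : ℕ) (f : C 1 ≃ₜ C n) (i : Fin n), InVG f ∧
    v = ⟨n, coset f⟩ ∧ w = ⟨n + 1, coset (f.trans (splitAt i))⟩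

/-- `w` is an expansion of `v` (written `v ≤ w`): `w` is obtained from `v` by
a finite (possibly empty) sequence of splittings. -/
def Expansion : PP → PP → Prop := Relation.ReflTransGen SplittingOf

/-- The four possible elementary pieces `1, x, σ₁ ∘ x, x₁ ∘ x` (with their
ranks), used to define elementary expansions. -/
def elemSet : Set (Σ m : ℕ, (C 1 ≃ₜ C m)) :=
  {⟨1, Homeomorph.refl (C 1)⟩, ⟨2, split⟩,
   ⟨2, split.trans (sigmaAt (0 : Fin 2))⟩,
   ⟨3, split.trans (splitAt (0 : Fin 2))⟩}

/-- `w` is an elementary expansion of `v`: `v = [f]` and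
`w = [(u₁ ⊕ ⋯ ⊕ u_n) ∘ f]` where each `uᵢ ∈ {1, x, σ₁∘x, x₁∘x}`. -/
def ElemExp (v w : PP) : Prop :=
  ∃ (n : ℕ) (f : C 1 ≃ₜ C n) (m : Fin n → ℕ) (h : ∀ i, C 1 ≃ₜ C (m i)),
    InVG f ∧ (∀ i, (⟨m i, h i⟩ : Σ m : ℕ, (C 1 ≃ₜ C m)) ∈ elemSet) ∧
    v = ⟨n, coset f⟩ ∧ w = ⟨∑ i, m i, coset (f.trans (dsumFamH h))⟩

section Lemmas

/-- apply lemma for points of `C 1`. -/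
lemma C1_pt (p : C 1) : p = (0, p.2) := by
  exact Prod.ext (Subsingleton.elim _ _) rfl

/-- action of a homeo of `C 1` on `Δ`. -/
def hact (h : C 1 ≃ₜ C 1) (w : Δ) : Δ := (h (0, w)).2

lemma apply_C1 (h : C 1 ≃ₜ C 1) (p : C 1) : h p = (0, hact h p.2) := by
  rw [C1_pt p]; exact Prod.ext (Subsingleton.elim _ _) rfl

lemma hact_trans (a b : C 1 ≃ₜ C 1) (w : Δ) :
    hact (a.trans b) w = hact b (hact a w) := by
  show (b (a (0,w))).2 = _
  rw [apply_C1 a (0,w)]; rfl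

lemma hact_refl (w : Δ) : hact (Homeomorph.refl (C 1)) w = w := rfl

lemma permC_apply {n : ℕ} (α : Equiv.Perm (Fin n)) (q : Fin n) (w : Δ) :
    permC α (q, w) = (α q, w) := rfl

lemma permC_trans {n : ℕ} (α β : Equiv.Perm (Fin n)) :
    (permC α).trans (permC β) = permC (α.trans β) := by
  apply Homeomorph.ext; rintro ⟨q, w⟩; rfl

lemma permC_refl {n : ℕ} : permC (1 : Equiv.Perm (Fin n)) = Homeomorph.refl (C n) := by
  apply Homeomorph.ext; rintro ⟨q, w⟩; rfl

lemma dsum_apply_left {m m' n n' : ℕ} (f : C m ≃ₜ C m') (g : C n ≃ₜ C n')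
    (q : Fin m) (w : Δ) :
    dsum f g (Fin.castAdd n q, w) = (Fin.castAdd n' (f (q, w)).1, (f (q, w)).2) := by
  simp [dsum, toSum, discHomeo, Homeomorph.trans, Homeomorph.prodCongr,
    Homeomorph.sumProdDistrib, Homeomorph.sumCongr, Equiv.sumProdDistrib,
    Prod.map, finSumFinEquiv_apply_left]

lemma dsum_apply_right {m m' n n' : ℕ} (f : C m ≃ₜ C m') (g : C n ≃ₜ C n')
    (q : Fin n) (w : Δ) :
    dsum f g (Fin.natAdd m q, w) = (Fin.natAdd m' (g (q, w)).1, (g (q, w)).2) := by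
  simp [dsum, toSum, discHomeo, Homeomorph.trans, Homeomorph.prodCongr,
    Homeomorph.sumProdDistrib, Homeomorph.sumCongr, Equiv.sumProdDistrib,
    Prod.map, finSumFinEquiv_apply_right]

end Lemmas
lemma castC_apply {m n : ℕ} (h : m = n) (q : Fin m) (w : Δ) :
    castC h (q, w) = (finCongr h q, w) := rfl

lemma splitAt_apply_lt {n : ℕ} (i q : Fin n) (h : (q:ℕ) < i) (w : Δ) :
    splitAt i (q,w) = (q.castSucc, w) := by
  simp only [splitAt, Homeomorph.trans_apply, castC_apply]
  have e1 : (finCongr (show n = (i : ℕ) + 1 + (n - 1 - i) by have := i.isLt; omega) q)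
      = Fin.castAdd (n-1-(i:ℕ)) (Fin.castAdd 1 (⟨q, h⟩ : Fin i)) := by
    ext; simp
  rw [e1, dsum_apply_left, dsum_apply_left]
  simp only [Homeomorph.refl_apply]
  refine Prod.ext ?_ rfl
  rw [castC_apply]; ext; simp

lemma splitAt_apply_gt {n : ℕ} (i q : Fin n) (h : (i:ℕ) < q) (w : Δ) :
    splitAt i (q,w) = (q.succ, w) := by
  simp only [splitAt, Homeomorph.trans_apply, castC_apply]
  have e1 : (finCongr (show n = (i : ℕ) + 1 + (n - 1 - i) by have := i.isLt; omega) q)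
      = Fin.natAdd ((i:ℕ)+1) (⟨(q:ℕ) - (i+1), by have := q.isLt; omega⟩ : Fin (n-1-i)) := by
    ext; simp; omega
  rw [e1, dsum_apply_right]
  simp only [Homeomorph.refl_apply]
  refine Prod.ext ?_ rfl
  rw [castC_apply]; ext; simp; omega

lemma split_apply (w : Δ) :
    split ((0 : Fin 1), w) = (finTwoEquiv.symm (w 0), fun k => w (k+1)) := rfl

lemma splitAt_apply_eq {n : ℕ} (i : Fin n) (w : Δ) :
    splitAt i ((i : Fin n), w)
      = ((if w 0 then i.succ else i.castSucc : Fin (n+1)), fun k => w (k+1)) := by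
  simp only [splitAt, Homeomorph.trans_apply, castC_apply]
  have e1 : (finCongr (show n = (i : ℕ) + 1 + (n - 1 - i) by have := i.isLt; omega) i)
      = Fin.castAdd (n-1-(i:ℕ)) (Fin.natAdd (i:ℕ) (0 : Fin 1)) := by
    ext; simp
  rw [e1, dsum_apply_left, dsum_apply_right]
  have e2 : ((0 : Fin 1), w) = (((0 : Fin 1) : Fin 1), w) := rfl
  rw [show ((0 : Fin 1), w) = ((0 : Fin 1), w) from rfl, split_apply]
  refine Prod.ext ?_ rfl
  rw [castC_apply]; ext
  cases hw : w 0 <;> simp [finTwoEquiv, hw]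
lemma dsumFam_apply {n : ℕ} (k : Fin n → (C 1 ≃ₜ C 1)) (q : Fin n) (w : Δ) :
    dsumFam k (q, w) = (q, hact (k q) w) := by
  induction n with
  | zero => exact absurd q.isLt (by omega)
  | succ n ih =>
    cases q using Fin.lastCases with
    | last =>
      show dsum _ _ (Fin.last n, w) = _
      have e : (Fin.last n) = Fin.natAdd n (0 : Fin 1) := by ext; simp
      rw [e, dsum_apply_right]
      refine Prod.ext ?_ rfl
      simp [Subsingleton.elim ((k (Fin.natAdd n 0) (0, w)).1) 0]
    | cast p =>
      show dsum _ _ (Fin.castAdd 1 p, w) = _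
      rw [dsum_apply_left, ih]
      exact Prod.ext (by ext; simp) rfl
lemma GS.stArr_e (w : Δ) (n : ℕ) : GS.stArr .e w n = .e := by
  induction n with
  | zero => rfl
  | succ n ih => rw [GS.stArr, ih]; rfl

lemma GS.act_e (w : Δ) : GS.act .e w = w := by
  funext n; rw [GS.act, GS.stArr_e]; rfl

lemma GS.stArr_shift (g : GS) (w : Δ) (n : ℕ) :
    GS.stArr g w (n+1) = GS.stArr (g.step (w 0)) (fun k => w (k+1)) n := by
  induction n with
  | zero => rfl
  | succ n ih => rw [GS.stArr, ih]; rfl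

lemma GS.act_tail (g : GS) (w : Δ) (k : ℕ) :
    GS.act g w (k+1) = GS.act (g.step (w 0)) (fun j => w (j+1)) k := by
  rw [GS.act, GS.act, GS.stArr_shift]

lemma hact_lift (h : Δ ≃ₜ Δ) (w : Δ) : hact (liftC1 h) w = h w := rfl

lemma dsumFam_trans {n : ℕ} (a b : Fin n → (C 1 ≃ₜ C 1)) :
    (dsumFam a).trans (dsumFam b) = dsumFam (fun i => (a i).trans (b i)) := by
  refine Homeomorph.ext ?_; rintro ⟨q, w⟩
  simp [Homeomorph.trans_apply, dsumFam_apply, hact_trans]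

lemma dsumFam_refl {n : ℕ} :
    dsumFam (fun _ : Fin n => Homeomorph.refl (C 1)) = Homeomorph.refl (C n) := by
  refine Homeomorph.ext ?_; rintro ⟨q, w⟩
  simp [dsumFam_apply, hact_refl]

lemma permC_dsumFam {n : ℕ} (γ : Equiv.Perm (Fin n)) (k : Fin n → (C 1 ≃ₜ C 1)) :
    (permC γ).trans (dsumFam k) = (dsumFam (fun i => k (γ i))).trans (permC γ) := by
  refine Homeomorph.ext ?_; rintro ⟨q, w⟩
  simp [Homeomorph.trans_apply, dsumFam_apply, permC_apply]

/-- The self-similarity property of an element of `C 1 ≃ₜ C 1`. -/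
def SplitRel (g : C 1 ≃ₜ C 1) : Prop :=
  ∃ (β : Equiv.Perm (Fin 2)) (k : Fin 2 → (C 1 ≃ₜ C 1)), (∀ t, k t ∈ Grig) ∧
    g.trans split = (split.trans (dsumFam k)).trans (permC β)

lemma gen_mem : gσ ∈ Grig ∧ gb ∈ Grig ∧ gc ∈ Grig ∧ gd ∈ Grig := by
  refine ⟨?_, ?_, ?_, ?_⟩ <;> apply Subgroup.subset_closure <;> simp [Set.mem_insert_iff]

lemma one_mem_Grig : Homeomorph.refl (C 1) ∈ Grig := Subgroup.one_mem Grig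

lemma gσ_split : gσ.trans split
    = (split.trans (dsumFam (fun _ => Homeomorph.refl (C 1)))).trans
        (permC (Equiv.swap 0 1)) := by
  refine Homeomorph.ext ?_; rintro ⟨q, w⟩
  obtain rfl : q = 0 := Subsingleton.elim _ _
  simp only [Homeomorph.trans_apply]
  rw [apply_C1 gσ, split_apply, split_apply, dsumFam_apply, permC_apply]
  refine Prod.ext ?_ ?_
  · show finTwoEquiv.symm (GS.act .s w 0) = Equiv.swap 0 1 (finTwoEquiv.symm (w 0))
    cases h : w 0 <;> simp [GS.act, GS.stArr, GS.out, h, finTwoEquiv] <;> decide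
  · funext k
    show GS.act .s w (k+1) = w (k+1)
    rw [GS.act_tail]
    show GS.act .e _ k = _
    rw [GS.act_e]
lemma gb_split : gb.trans split
    = (split.trans (dsumFam ![gσ, gc])).trans (permC 1) := by
  refine Homeomorph.ext ?_; rintro ⟨q, w⟩
  obtain rfl : q = 0 := Subsingleton.elim _ _
  simp only [Homeomorph.trans_apply]
  rw [apply_C1 gb, split_apply, split_apply, dsumFam_apply, permC_apply]
  refine Prod.ext ?_ ?_
  · show finTwoEquiv.symm (GS.act .b w 0) = (1 : Equiv.Perm (Fin 2)) (finTwoEquiv.symm (w 0))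
    cases h : w 0 <;> simp [GS.act, GS.stArr, GS.out, h]
  · funext k
    show GS.act .b w (k+1) = hact (![gσ, gc] (finTwoEquiv.symm (w 0))) (fun j => w (j+1)) k
    rw [GS.act_tail]
    cases h : w 0 <;> simp [h, GS.step, finTwoEquiv] <;> rfl

lemma gc_split : gc.trans split
    = (split.trans (dsumFam ![gσ, gd])).trans (permC 1) := by
  refine Homeomorph.ext ?_; rintro ⟨q, w⟩
  obtain rfl : q = 0 := Subsingleton.elim _ _
  simp only [Homeomorph.trans_apply]
  rw [apply_C1 gc, split_apply, split_apply, dsumFam_apply, permC_apply]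
  refine Prod.ext ?_ ?_
  · show finTwoEquiv.symm (GS.act .c w 0) = (1 : Equiv.Perm (Fin 2)) (finTwoEquiv.symm (w 0))
    cases h : w 0 <;> simp [GS.act, GS.stArr, GS.out, h]
  · funext k
    show GS.act .c w (k+1) = hact (![gσ, gd] (finTwoEquiv.symm (w 0))) (fun j => w (j+1)) k
    rw [GS.act_tail]
    cases h : w 0 <;> simp [h, GS.step, finTwoEquiv] <;> rfl

lemma gd_split : gd.trans split
    = (split.trans (dsumFam ![Homeomorph.refl (C 1), gb])).trans (permC 1) := by
  refine Homeomorph.ext ?_; rintro ⟨q, w⟩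
  obtain rfl : q = 0 := Subsingleton.elim _ _
  simp only [Homeomorph.trans_apply]
  rw [apply_C1 gd, split_apply, split_apply, dsumFam_apply, permC_apply]
  refine Prod.ext ?_ ?_
  · show finTwoEquiv.symm (GS.act .d w 0) = (1 : Equiv.Perm (Fin 2)) (finTwoEquiv.symm (w 0))
    cases h : w 0 <;> simp [GS.act, GS.stArr, GS.out, h]
  · funext k
    show GS.act .d w (k+1) = hact (![Homeomorph.refl (C 1), gb] (finTwoEquiv.symm (w 0))) (fun j => w (j+1)) k
    rw [GS.act_tail]
    cases h : w 0 <;> simp [h, GS.step, finTwoEquiv] <;> first | rfl | (rw [GS.act_e]; rfl)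
lemma htrans_assoc {a b c d : ℕ} (f : C a ≃ₜ C b) (g : C b ≃ₜ C c) (h : C c ≃ₜ C d) :
    (f.trans g).trans h = f.trans (g.trans h) := rfl

lemma hact_symm_hact (a : C 1 ≃ₜ C 1) (v : Δ) : hact a.symm (hact a v) = v := by
  have h : ((0 : Fin 1), hact a v) = a (0, v) := (apply_C1 a (0, v)).symm
  rw [hact, h, Homeomorph.symm_apply_apply]

lemma splitRel_of_mem : ∀ g ∈ Grig, SplitRel g := by
  intro g hg
  induction hg using Subgroup.closure_induction with
  | mem x hx =>
    rcases hx with h | h | h | h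
    · exact h ▸ ⟨Equiv.swap 0 1, fun _ => Homeomorph.refl (C 1),
        fun _ => one_mem_Grig, gσ_split⟩
    · refine h ▸ ⟨1, ![gσ, gc], ?_, gb_split⟩
      intro t; fin_cases t
      exacts [gen_mem.1, gen_mem.2.2.1]
    · refine h ▸ ⟨1, ![gσ, gd], ?_, gc_split⟩
      intro t; fin_cases t
      exacts [gen_mem.1, gen_mem.2.2.2]
    · refine h ▸ ⟨1, ![Homeomorph.refl (C 1), gb], ?_, gd_split⟩
      intro t; fin_cases t
      exacts [one_mem_Grig, gen_mem.2.1]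
  | one =>
    refine ⟨1, fun _ => Homeomorph.refl (C 1), fun _ => one_mem_Grig, ?_⟩
    refine Homeomorph.ext ?_; rintro ⟨q, w⟩
    simp only [Homeomorph.trans_apply]
    have h1 : (1 : C 1 ≃ₜ C 1) (q, w) = (q, w) := rfl
    rw [h1]
    rcases hsp : split (q, w) with ⟨t, v⟩
    rw [dsumFam_apply, permC_apply]
    simp [hact_refl]
  | mul x y _ _ hx hy =>
    obtain ⟨β, k, hk, hkeq⟩ := hx
    obtain ⟨γ, k', hk', hkeq'⟩ := hy
    refine ⟨γ.trans β, fun i => (k' i).trans (k (γ i)),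
      fun i => mul_mem (hk (γ i)) (hk' i), ?_⟩
    refine Homeomorph.ext ?_; rintro ⟨q, w⟩
    have hx' : ∀ p : C 1, split (x p) = permC β (dsumFam k (split p)) :=
      fun p => congrArg (fun F : C 1 ≃ₜ C 2 => F p) hkeq
    have hy' : ∀ p : C 1, split (y p) = permC γ (dsumFam k' (split p)) :=
      fun p => congrArg (fun F : C 1 ≃ₜ C 2 => F p) hkeq'
    simp only [Homeomorph.trans_apply]
    have h1 : (x * y) (q, w) = x (y (q, w)) := rfl
    rw [h1, hx', hy']
    rcases hsp : split (q, w) with ⟨t, v⟩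
    rw [dsumFam_apply, permC_apply, dsumFam_apply, permC_apply, dsumFam_apply, permC_apply]
    exact Prod.ext rfl (hact_trans _ _ _).symm
  | inv x _ hx =>
    obtain ⟨β, k, hk, hkeq⟩ := hx
    refine ⟨β.symm, fun i => (k (β.symm i)).symm,
      fun i => inv_mem (hk (β.symm i)), ?_⟩
    have key : x.trans ((split.trans (dsumFam (fun i => (k (β.symm i)).symm))).trans
        (permC β.symm)) = split := by
      refine Homeomorph.ext ?_; rintro ⟨q, w⟩
      have hx' : ∀ p : C 1, split (x p) = permC β (dsumFam k (split p)) :=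
        fun p => congrArg (fun F : C 1 ≃ₜ C 2 => F p) hkeq
      simp only [Homeomorph.trans_apply]
      rw [hx']
      rcases hsp : split (q, w) with ⟨t, v⟩
      rw [dsumFam_apply, permC_apply, dsumFam_apply, permC_apply]
      refine Prod.ext (by simp) ?_
      show hact (k (β.symm (β t))).symm (hact (k t) v) = v
      rw [Equiv.symm_apply_apply, hact_symm_hact]
    have hinv : x⁻¹ = x.symm := rfl
    rw [hinv]
    conv_lhs => rw [← key, ← htrans_assoc, Homeomorph.symm_trans_self]
    exact Homeomorph.ext fun _ => rfl
lemma splitAt_apply_ne {n : ℕ} (i q : Fin n) (h : q ≠ i) (w : Δ) :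
    splitAt i (q, w) = (i.succ.succAbove q, w) := by
  rcases lt_or_gt_of_ne (fun hv : (q:ℕ) = (i:ℕ) => h (Fin.ext hv)) with hlt | hgt
  · rw [splitAt_apply_lt i q hlt, Fin.succAbove_of_castSucc_lt]
    rw [Fin.lt_def]; simpa using Nat.lt_succ_of_lt hlt
  · rw [splitAt_apply_gt i q hgt, Fin.succAbove_of_le_castSucc]
    rw [Fin.le_def]; simpa using hgt

lemma succAbove_self' {n : ℕ} (j : Fin n) : (j.succ).succAbove j = j.castSucc :=
  Fin.succAbove_of_castSucc_lt _ _ (Fin.castSucc_lt_succ (i := j))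

/-- The permutation of `Fin (n+1)` obtained from `α` by blowing up the point
`α.symm i ↦ i` into two points. -/
def blowup {n : ℕ} (α : Equiv.Perm (Fin n)) (i : Fin n) : Equiv.Perm (Fin (n+1)) :=
  (finSuccEquiv' (α.symm i).succ).trans ((Equiv.optionCongr α).trans (finSuccEquiv' i.succ).symm)

lemma blowup_succAbove {n : ℕ} (α : Equiv.Perm (Fin n)) (i : Fin n) (q : Fin n) :
    blowup α i ((α.symm i).succ.succAbove q) = i.succ.succAbove (α q) := by
  simp [blowup, finSuccEquiv'_succAbove, finSuccEquiv'_symm_some]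

lemma blowup_at {n : ℕ} (α : Equiv.Perm (Fin n)) (i : Fin n) :
    blowup α i ((α.symm i).succ) = i.succ := by
  simp [blowup, finSuccEquiv'_at, finSuccEquiv'_symm_none]

/-- Lemma A: commuting a permutation past a split. -/
lemma permC_trans_splitAt {n : ℕ} (α : Equiv.Perm (Fin n)) (i : Fin n) :
    (permC α).trans (splitAt i) = (splitAt (α.symm i)).trans (permC (blowup α i)) := by
  refine Homeomorph.ext ?_; rintro ⟨q, w⟩
  simp only [Homeomorph.trans_apply, permC_apply]
  by_cases hq : q = α.symm i
  · subst hq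
    rw [Equiv.apply_symm_apply, splitAt_apply_eq, splitAt_apply_eq]
    rw [permC_apply]
    refine Prod.ext ?_ rfl
    cases hw : w 0 <;> simp only [Bool.false_eq_true, if_false, if_true]
    · rw [← succAbove_self' (α.symm i), blowup_succAbove, Equiv.apply_symm_apply,
        succAbove_self']
    · exact (blowup_at α i).symm
  · have hq' : α q ≠ i := fun h => hq (by rw [← h, Equiv.symm_apply_apply])
    rw [splitAt_apply_ne _ _ hq', splitAt_apply_ne _ _ hq, permC_apply, blowup_succAbove]

/-- Lemma B: commuting a direct sum of Grigorchuk elements past a split. -/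
lemma dsumFam_trans_splitAt {n : ℕ} (g : Fin n → (C 1 ≃ₜ C 1)) (hg : ∀ i, g i ∈ Grig)
    (j : Fin n) :
    ∃ (g'' : Fin (n+1) → (C 1 ≃ₜ C 1)) (δ : Equiv.Perm (Fin (n+1))), (∀ t, g'' t ∈ Grig) ∧
      (dsumFam g).trans (splitAt j) = (splitAt j).trans ((dsumFam g'').trans (permC δ)) := by
  obtain ⟨β, k, hk, hrel⟩ := splitRel_of_mem (g j) (hg j)
  have perm2' : ∀ γ : Equiv.Perm (Fin 2), γ = 1 ∨ γ = Equiv.swap 0 1 := by decide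
  have perm2 : β = 1 ∨ β = Equiv.swap 0 1 := perm2' β
  set g'' : Fin (n+1) → (C 1 ≃ₜ C 1) :=
    fun t => (finSuccEquiv' j.succ t).elim (k 1) (fun q => if q = j then k 0 else g q) with hg''
  have hg''_mem : ∀ t, g'' t ∈ Grig := by
    intro t
    rcases h : finSuccEquiv' j.succ t with _ | q
    · simp only [hg'', h, Option.elim]; exact hk 1
    · simp only [hg'', h, Option.elim]
      by_cases hqj : q = j
      · rw [if_pos hqj]; exact hk 0
      · rw [if_neg hqj]; exact hg q
  have hg''_above : ∀ q : Fin n, g'' (j.succ.succAbove q) = if q = j then k 0 else g q := by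
    intro q; simp [hg'', finSuccEquiv'_succAbove]
  have hg''_succ : g'' j.succ = k 1 := by simp [hg'', finSuccEquiv'_at]
  set δ : Equiv.Perm (Fin (n+1)) :=
    if β = 1 then 1 else Equiv.swap j.castSucc j.succ with hδ
  have hδ_ne : ∀ q : Fin n, q ≠ j → δ (j.succ.succAbove q) = j.succ.succAbove q := by
    intro q hqj
    rcases perm2 with h1 | hs
    · rw [hδ, if_pos h1]; rfl
    · rw [hδ, if_neg (by rw [hs]; decide)]
      refine Equiv.swap_apply_of_ne_of_ne ?_ ?_
      · rw [← succAbove_self' j]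
        exact fun h => hqj (Fin.succAbove_right_injective h)
      · exact Fin.succAbove_ne _ _
  -- the key relation from self-similarity, in pointwise form
  have hrel' : ∀ w : Δ, (finTwoEquiv.symm (hact (g j) w 0)
        = β (finTwoEquiv.symm (w 0)))
      ∧ (fun kk => hact (g j) w (kk+1)) = hact (k (finTwoEquiv.symm (w 0))) (fun kk => w (kk+1)) := by
    intro w
    have h := congrArg (fun F : C 1 ≃ₜ C 2 => F ((0 : Fin 1), w)) hrel
    simp only [Homeomorph.trans_apply] at h
    rw [apply_C1 (g j), split_apply, split_apply, dsumFam_apply, permC_apply] at h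
    exact ⟨congrArg Prod.fst h, congrArg Prod.snd h⟩
  refine ⟨g'', δ, hg''_mem, ?_⟩
  refine Homeomorph.ext ?_; rintro ⟨q, w⟩
  simp only [Homeomorph.trans_apply]
  rw [dsumFam_apply]
  by_cases hq : q = j
  · subst hq
    rw [splitAt_apply_eq, splitAt_apply_eq, dsumFam_apply, permC_apply]
    obtain ⟨E1, E2⟩ := hrel' w
    refine Prod.ext ?_ ?_
    · show (if hact (g q) w 0 = true then q.succ else q.castSucc) = δ _
      rcases perm2 with h1 | hs
      · rw [h1] at E1
        have : hact (g q) w 0 = w 0 := by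
          have := E1
          cases hw : w 0 <;> cases hb : hact (g q) w 0 <;>
            rw [hw, hb] at this <;> simp_all [finTwoEquiv]
        have hδeq : δ = 1 := by rw [hδ, if_pos h1]
        rw [this, hδeq]; rfl
      · rw [hs] at E1
        have : hact (g q) w 0 = !(w 0) := by
          cases hw : w 0 <;> cases hb : hact (g q) w 0 <;>
            rw [hw, hb] at E1 <;> simp_all [finTwoEquiv] <;> revert E1 <;> decide
        have hδeq : δ = Equiv.swap q.castSucc q.succ := by
          rw [hδ, if_neg (by rw [hs]; decide)]
        rw [this, hδeq]
        cases hw : w 0 <;>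
          simp only [Bool.not_false, Bool.not_true, Bool.false_eq_true, if_false, if_true]
        · exact (Equiv.swap_apply_left _ _).symm
        · exact (Equiv.swap_apply_right _ _).symm
    · show (fun kk => hact (g q) w (kk+1)) = hact (g'' (if w 0 = true then q.succ else q.castSucc)) (fun kk => w (kk+1))
      rw [E2]
      congr 1
      cases hw : w 0
      · rw [if_neg Bool.false_ne_true, ← succAbove_self' q, hg''_above, if_pos rfl]
        simp [finTwoEquiv]
      · rw [if_pos rfl, hg''_succ]
        simp [finTwoEquiv]
  · rw [splitAt_apply_ne _ _ hq, splitAt_apply_ne _ _ hq, dsumFam_apply, permC_apply,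
      hg''_above, if_neg hq, hδ_ne q hq]
theorem grig_forest_expansion (m n : ℕ) (f : C m ≃ₜ C n) (hf : IsForest f)
    (g : Fin m → (C 1 ≃ₜ C 1)) (hg : ∀ i, g i ∈ Grig) :
    ∃ (f' : C m ≃ₜ C n) (g' : Fin n → (C 1 ≃ₜ C 1)) (α : Equiv.Perm (Fin n)),
      IsForest f' ∧ (∀ i, g' i ∈ Grig) ∧
      (dsumFam g).trans f = (f'.trans (dsumFam g')).trans (permC α) := by
  induction hf generalizing g hg with
  | refl =>
    refine ⟨Homeomorph.refl _, g, 1, IsForest.refl _, hg, ?_⟩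
    refine Homeomorph.ext ?_; rintro ⟨q, w⟩
    rfl
  | step i hf ih =>
    obtain ⟨f₁, g₁, α₁, hff₁, hg₁, heq⟩ := ih g hg
    obtain ⟨g'', δ, hg''mem, heqB⟩ := dsumFam_trans_splitAt g₁ hg₁ (α₁.symm i)
    refine ⟨f₁.trans (splitAt (α₁.symm i)), g'', δ.trans (blowup α₁ i),
      IsForest.step _ hff₁, hg''mem, ?_⟩
    rw [← htrans_assoc, heq, htrans_assoc (f₁.trans (dsumFam g₁)), permC_trans_splitAt,
      ← htrans_assoc (f₁.trans (dsumFam g₁)), htrans_assoc f₁ (dsumFam g₁), heqB]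
    exact Homeomorph.ext fun _ => rfl
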